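/- Let L = ℤ₂⟨c₀, c₁, d₀, d₁⟩ be the free ℤ₂-algebra on four noncommuting variables, and J the two-sided ideal generated by c₀d₀, c₀d₁ + c₁d₀, c₁d₁, all products d_i d_j (0 ≤ i, j ≤ 1), and all products d_i c_j (0 ≤ i, j ≤ 1). Then the quotient ring S = L/J is inner McCoy. -/

import Mathlib

def IsInnerMcCoy (S : Type*) [Ring S] : Prop :=
  ∀ f g : Polynomial S, f ≠ 0 → g ≠ 0 → f * g * f = 0 →
    ∃ r : S, r ≠ 0 ∧ f * Polynomial.C r * f = 0

noncomputable section

/-- The free `ℤ₂`-algebra on the four noncommuting generators `c₀, c₁, d₀, d₁`. -/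
abbrev L : Type := FreeAlgebra (ZMod 2) (Fin 4)

def c0 : L := FreeAlgebra.ι (ZMod 2) 0
def c1 : L := FreeAlgebra.ι (ZMod 2) 1
def d0 : L := FreeAlgebra.ι (ZMod 2) 2
def d1 : L := FreeAlgebra.ι (ZMod 2) 3

/-- The relations generating the two-sided ideal
`J = ⟨c₀d₀, c₀d₁ + c₁d₀, c₁d₁, dᵢdⱼ, dᵢcⱼ (0 ≤ i, j ≤ 1)⟩`. -/
inductive NielsenRel : L → L → Prop
  | r1 : NielsenRel (c0 * d0) 0
  | r2 : NielsenRel (c0 * d1 + c1 * d0) 0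
  | r3 : NielsenRel (c1 * d1) 0
  | rdd : ∀ a b : L, (a = d0 ∨ a = d1) → (b = d0 ∨ b = d1) → NielsenRel (a * b) 0
  | rdc : ∀ a b : L, (a = d0 ∨ a = d1) → (b = c0 ∨ b = c1) → NielsenRel (a * b) 0

/-- The quotient ring `S = L / J`. -/
abbrev NielsenRing : Type := RingQuot NielsenRel

namespace Nielsen

abbrev K := ZMod 2
abbrev A : Type := FreeAlgebra K (Fin 2)

def εA : A →ₐ[K] K := FreeAlgebra.algebraMapInv

abbrev D : Type := K × K × A

/-- action of `c₀` on `D`. -/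
def e0 : Module.End K D where
  toFun m := (0, 0, m.2.1 • (1 : A) + FreeAlgebra.ι K 0 * m.2.2)
  map_add' x y := by
    ext <;> simp [add_smul, mul_add] <;> abel
  map_smul' k x := by
    ext <;> simp [smul_smul, mul_smul_comm, smul_add, smul_comm]

def e1 : Module.End K D where
  toFun m := (0, 0, m.1 • (1 : A) + FreeAlgebra.ι K 1 * m.2.2)
  map_add' x y := by
    ext <;> simp [add_smul, mul_add] <;> abel
  map_smul' k x := by
    ext <;> simp [smul_smul, mul_smul_comm, smul_add, smul_comm]

def ρ : A →ₐ[K] Module.End K D := FreeAlgebra.lift K ![e0, e1]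

instance instModAD : Module A D := Module.compHom D ρ.toRingHom

lemma smul_def (a : A) (m : D) : a • m = ρ a m := rfl

instance instSMulOp : SMul Aᵐᵒᵖ D := ⟨fun a m => εA a.unop • m⟩

lemma op_smul_def (a : Aᵐᵒᵖ) (m : D) : a • m = εA a.unop • m := rfl

instance instModOp : Module Aᵐᵒᵖ D where
  one_smul m := by rw [op_smul_def]; simp
  mul_smul a b m := by simp [op_smul_def, mul_smul, mul_comm]
  smul_zero a := by rw [op_smul_def]; simp
  smul_add a x y := by simp [op_smul_def]
  add_smul a b m := by simp [op_smul_def, add_smul]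
  zero_smul m := by rw [op_smul_def]; simp

instance : SMulCommClass A Aᵐᵒᵖ D :=
  ⟨fun a b m => by rw [op_smul_def, op_smul_def, smul_def, smul_def, map_smul]⟩

instance : IsScalarTower K A D :=
  ⟨fun k a m => by rw [smul_def, smul_def, map_smul, LinearMap.smul_apply]⟩

instance : IsScalarTower K Aᵐᵒᵖ D :=
  ⟨fun k a m => by
    rw [op_smul_def, op_smul_def, MulOpposite.unop_smul, map_smul, smul_assoc]⟩

abbrev S' : Type := TrivSqZeroExt A D

example : Ring S' := inferInstance
example : Algebra K S' := inferInstance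


open TrivSqZeroExt in
lemma εA_ι (i : Fin 2) : εA (FreeAlgebra.ι K i) = 0 := by
  simp [εA, FreeAlgebra.algebraMapInv]

lemma ι0_smul (m : D) :
    (FreeAlgebra.ι K 0 : A) • m = (0, 0, m.2.1 • (1 : A) + FreeAlgebra.ι K 0 * m.2.2) := by
  rw [smul_def, ρ]
  simp only [FreeAlgebra.lift_ι_apply, Matrix.cons_val_zero]
  rfl

lemma ι1_smul (m : D) :
    (FreeAlgebra.ι K 1 : A) • m = (0, 0, m.1 • (1 : A) + FreeAlgebra.ι K 1 * m.2.2) := by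
  rw [smul_def, ρ]
  simp only [FreeAlgebra.lift_ι_apply, Matrix.cons_val_one, Matrix.head_cons]
  rfl

lemma algebraMap_smul_D (r : K) (m : D) : (algebraMap K A r) • m = r • m := by
  rw [smul_def, AlgHom.commutes, Module.algebraMap_end_apply]

def mk : L →ₐ[K] NielsenRing := RingQuot.mkAlgHom K NielsenRel

def gens : Fin 4 → S' :=
  ![.inl (FreeAlgebra.ι K 0), .inl (FreeAlgebra.ι K 1), .inr (1,0,0), .inr (0,1,0)]

def φ₀ : L →ₐ[K] S' := FreeAlgebra.lift K gens

lemma two_eq_zero_A : (1 + 1 : A) = 0 := by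
  have h2 : (1 + 1 : K) = 0 := by decide
  calc (1 + 1 : A) = algebraMap K A (1 + 1) := by rw [map_add, map_one]
  _ = 0 := by rw [h2, map_zero]

open TrivSqZeroExt in
lemma φ₀_rel : ∀ ⦃x y : L⦄, NielsenRel x y → φ₀ x = φ₀ y := by
  intro x y h
  induction h with
  | r1 =>
    simp only [φ₀, c0, d0, map_mul, map_zero, FreeAlgebra.lift_ι_apply, gens]
    simp [inl_mul_inr, ι0_smul]
    rfl
  | r2 =>
    simp only [φ₀, c0, c1, d0, d1, map_mul, map_add, map_zero, FreeAlgebra.lift_ι_apply, gens]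
    simp only [Matrix.cons_val_zero, Matrix.cons_val_one, Matrix.head_cons,
      Matrix.cons_val_two, Matrix.cons_val_three, Matrix.tail_cons]
    rw [inl_mul_inr, inl_mul_inr, ← inr_add, ι0_smul, ι1_smul]
    have : ((0, 0, ((0:K), (1:K), (0:A)).2.1 • (1:A) + FreeAlgebra.ι K 0 * ((0:K), (1:K), (0:A)).2.2) +
        (0, 0, ((1:K), (0:K), (0:A)).1 • (1:A) + FreeAlgebra.ι K 1 * ((1:K), (0:K), (0:A)).2.2) : D) = 0 := by
      ext <;> simp [two_eq_zero_A]
    rw [this, inr_zero]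
  | r3 =>
    simp only [φ₀, c1, d1, map_mul, map_zero, FreeAlgebra.lift_ι_apply, gens]
    simp [inl_mul_inr, ι1_smul]
    rfl
  | rdd a b ha hb =>
    rcases ha with rfl | rfl <;> rcases hb with rfl | rfl <;>
      simp [φ₀, d0, d1, map_mul, FreeAlgebra.lift_ι_apply, gens, inr_mul_inr]
  | rdc a b ha hb =>
    rcases ha with rfl | rfl <;> rcases hb with rfl | rfl <;>
    · simp only [φ₀, c0, c1, d0, d1, map_mul, map_zero, FreeAlgebra.lift_ι_apply, gens]
      simp [inr_mul_inl, op_smul_def, εA_ι]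

def φ : NielsenRing →ₐ[K] S' := RingQuot.liftAlgHom K ⟨φ₀, φ₀_rel⟩

def πA : A →ₐ[K] NielsenRing := FreeAlgebra.lift K ![mk c0, mk c1]
def δ₀ : NielsenRing := mk d0
def δ₁ : NielsenRing := mk d1
def η : NielsenRing := mk (c0 * d1)

lemma rel0 {x : L} (h : NielsenRel x 0) : mk x = 0 := by
  have := RingQuot.mkAlgHom_rel K h
  simpa [mk] using this

lemma char2 {M : Type*} [AddCommGroup M] [Module K M] (y : M) : y + y = 0 := by
  have h : (1 + 1 : K) • y = 0 := by
    have : (1 + 1 : K) = 0 := by decide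
    rw [this, zero_smul]
  simpa [add_smul] using h

lemma neg_eq_self {M : Type*} [AddCommGroup M] [Module K M] (y : M) : -y = y :=
  neg_eq_of_add_eq_zero_left (char2 y)

lemma η_def : η = mk c0 * δ₁ := by rw [η, δ₁, map_mul]

lemma mkc0_δ0 : mk c0 * δ₀ = 0 := by
  rw [δ₀, ← map_mul]; exact rel0 NielsenRel.r1

lemma mkc1_δ1 : mk c1 * δ₁ = 0 := by
  rw [δ₁, ← map_mul]; exact rel0 NielsenRel.r3

lemma mkc1_δ0 : mk c1 * δ₀ = η := by
  have h := rel0 NielsenRel.r2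
  rw [map_add, map_mul, map_mul] at h
  have : η + mk c1 * δ₀ = 0 := by rw [η_def, δ₁, δ₀]; exact h
  have h2 := neg_eq_of_add_eq_zero_left this
  rw [← h2, neg_eq_self]

lemma dmul {p q : L} (hp : p = d0 ∨ p = d1) (hq : q = d0 ∨ q = d1) :
    mk p * mk q = 0 := by rw [← map_mul]; exact rel0 (NielsenRel.rdd p q hp hq)

lemma dcmul {p q : L} (hp : p = d0 ∨ p = d1) (hq : q = c0 ∨ q = c1) :
    mk p * mk q = 0 := by rw [← map_mul]; exact rel0 (NielsenRel.rdc p q hp hq)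

lemma πA_ι0 : πA (FreeAlgebra.ι K 0) = mk c0 := by
  rw [πA, FreeAlgebra.lift_ι_apply]; rfl

lemma πA_ι1 : πA (FreeAlgebra.ι K 1) = mk c1 := by
  rw [πA, FreeAlgebra.lift_ι_apply]; rfl

lemma mul_pi_gen (z : NielsenRing) (h : ∀ i : Fin 2, z * πA (FreeAlgebra.ι K i) = 0)
    (u : A) : z * πA u = εA u • z := by
  induction u using FreeAlgebra.induction with
  | grade0 r =>
    rw [AlgHom.commutes, AlgHom.commutes, Algebra.algebraMap_eq_smul_one, mul_smul_comm,
      mul_one, Algebra.algebraMap_self_apply]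
  | grade1 i => rw [h i, εA_ι, zero_smul]
  | mul a b ha hb =>
    rw [map_mul, ← mul_assoc, ha, smul_mul_assoc, hb, map_mul, smul_smul, mul_comm (εA a)]
  | add a b ha hb => rw [map_add, mul_add, ha, hb, map_add, add_smul]

lemma δ0_pi (u : A) : δ₀ * πA u = εA u • δ₀ := by
  refine mul_pi_gen _ (fun i => ?_) u
  fin_cases i
  · show δ₀ * πA (FreeAlgebra.ι K 0) = 0
    rw [πA_ι0, δ₀]; exact dcmul (Or.inl rfl) (Or.inl rfl)
  · show δ₀ * πA (FreeAlgebra.ι K 1) = 0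
    rw [πA_ι1, δ₀]; exact dcmul (Or.inl rfl) (Or.inr rfl)

lemma δ1_pi (u : A) : δ₁ * πA u = εA u • δ₁ := by
  refine mul_pi_gen _ (fun i => ?_) u
  fin_cases i
  · show δ₁ * πA (FreeAlgebra.ι K 0) = 0
    rw [πA_ι0, δ₁]; exact dcmul (Or.inr rfl) (Or.inl rfl)
  · show δ₁ * πA (FreeAlgebra.ι K 1) = 0
    rw [πA_ι1, δ₁]; exact dcmul (Or.inr rfl) (Or.inr rfl)

lemma η_pi (u : A) : η * πA u = εA u • η := by
  rw [η_def, mul_assoc, δ1_pi, mul_smul_comm]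

lemma δ0_mul_δ0 : δ₀ * δ₀ = 0 := dmul (Or.inl rfl) (Or.inl rfl)
lemma δ0_mul_δ1 : δ₀ * δ₁ = 0 := dmul (Or.inl rfl) (Or.inr rfl)
lemma δ1_mul_δ0 : δ₁ * δ₀ = 0 := dmul (Or.inr rfl) (Or.inl rfl)
lemma δ1_mul_δ1 : δ₁ * δ₁ = 0 := dmul (Or.inr rfl) (Or.inr rfl)

lemma η_mul_δ0 : η * δ₀ = 0 := by rw [η_def, mul_assoc, δ1_mul_δ0, mul_zero]
lemma η_mul_δ1 : η * δ₁ = 0 := by rw [η_def, mul_assoc, δ1_mul_δ1, mul_zero]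
lemma δ0_mul_η : δ₀ * η = 0 := by
  rw [η_def, ← mul_assoc, δ₀, dcmul (Or.inl rfl) (Or.inl rfl), zero_mul]
lemma δ1_mul_η : δ₁ * η = 0 := by
  rw [η_def, ← mul_assoc, δ₁, dcmul (Or.inr rfl) (Or.inl rfl), zero_mul]
lemma η_mul_η : η * η = 0 := by
  nth_rewrite 1 [η_def]
  rw [mul_assoc, δ1_mul_η, mul_zero]

def ψD : D →ₗ[K] NielsenRing where
  toFun m := m.1 • δ₀ + m.2.1 • δ₁ + πA m.2.2 * η
  map_add' x y := by
    simp only [Prod.fst_add, Prod.snd_add, add_smul, map_add, add_mul]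
    abel
  map_smul' k x := by
    simp only [Prod.smul_fst, Prod.smul_snd, smul_eq_mul, RingHom.id_apply, map_smul,
      smul_smul, smul_mul_assoc, smul_add]

lemma ψD_apply (m : D) : ψD m = m.1 • δ₀ + m.2.1 • δ₁ + πA m.2.2 * η := rfl

lemma ψD_mul_pi (x : D) (v : A) : ψD x * πA v = εA v • ψD x := by
  rw [ψD_apply, add_mul, add_mul, smul_mul_assoc, smul_mul_assoc, δ0_pi, δ1_pi,
    mul_assoc, η_pi, mul_smul_comm, smul_add, smul_add, smul_comm (εA v) x.1,
    smul_comm (εA v) x.2.1]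

lemma ψD_mul_δ0 (x : D) : ψD x * δ₀ = 0 := by
  rw [ψD_apply, add_mul, add_mul, smul_mul_assoc, smul_mul_assoc, δ0_mul_δ0, δ1_mul_δ0,
    mul_assoc, η_mul_δ0, mul_zero]
  simp

lemma ψD_mul_δ1 (x : D) : ψD x * δ₁ = 0 := by
  rw [ψD_apply, add_mul, add_mul, smul_mul_assoc, smul_mul_assoc, δ0_mul_δ1, δ1_mul_δ1,
    mul_assoc, η_mul_δ1, mul_zero]
  simp

lemma ψD_mul_η (x : D) : ψD x * η = 0 := by
  rw [ψD_apply, add_mul, add_mul, smul_mul_assoc, smul_mul_assoc, δ0_mul_η, δ1_mul_η,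
    mul_assoc, η_mul_η, mul_zero]
  simp

lemma hg_lemma (x y : D) : ψD x * ψD y = 0 := by
  conv_lhs => rw [ψD_apply y]
  rw [mul_add, mul_add, mul_smul_comm, mul_smul_comm, ψD_mul_δ0, ψD_mul_δ1,
    ← mul_assoc, ψD_mul_pi, smul_mul_assoc, ψD_mul_η]
  simp

lemma hfg_lemma (a : A) (x : D) : ψD (a • x) = πA a * ψD x := by
  induction a using FreeAlgebra.induction generalizing x with
  | grade0 r =>
    rw [algebraMap_smul_D, map_smul, AlgHom.commutes, ← Algebra.smul_def]
  | grade1 i =>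
    fin_cases i
    · show ψD ((FreeAlgebra.ι K 0 : A) • x) = πA (FreeAlgebra.ι K 0) * ψD x
      rw [ι0_smul, πA_ι0, ψD_apply, ψD_apply]
      simp only [zero_smul, zero_add, map_add, map_smul, map_one, map_mul, πA_ι0]
      rw [add_mul, smul_mul_assoc, one_mul, mul_add, mul_add, mul_smul_comm,
        mul_smul_comm, mkc0_δ0, η_def, mul_assoc]
      simp
    · show ψD ((FreeAlgebra.ι K 1 : A) • x) = πA (FreeAlgebra.ι K 1) * ψD x
      rw [ι1_smul, πA_ι1, ψD_apply, ψD_apply]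
      simp only [zero_smul, zero_add, map_add, map_smul, map_one, map_mul, πA_ι1]
      rw [add_mul, smul_mul_assoc, one_mul, mul_add, mul_add, mul_smul_comm,
        mul_smul_comm, mkc1_δ0, mkc1_δ1, mul_assoc]
      simp
  | mul a b ha hb =>
    rw [mul_smul, ha, hb, map_mul, mul_assoc]
  | add a b ha hb =>
    rw [add_smul, map_add, ha, hb, map_add, add_mul]

lemma hgf_lemma (r : A) (x : D) : ψD (MulOpposite.op r • x) = ψD x * πA r := by
  rw [op_smul_def, MulOpposite.unop_op, map_smul, ψD_mul_pi]

def ψ : S' →ₐ[K] NielsenRing := TrivSqZeroExt.lift πA ψD hg_lemma hfg_lemma hgf_lemma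

lemma ψφ : ∀ s : NielsenRing, ψ (φ s) = s := by
  have h : ψ.comp φ = AlgHom.id K NielsenRing := by
    apply RingQuot.ringQuot_ext'
    apply FreeAlgebra.hom_ext
    funext i
    show ψ (φ (mk (FreeAlgebra.ι K i))) = mk (FreeAlgebra.ι K i)
    have hφ : ∀ x : L, φ (mk x) = φ₀ x := fun x =>
      RingQuot.liftAlgHom_mkAlgHom_apply K φ₀ φ₀_rel x
    fin_cases i <;>
      rw [hφ, φ₀, FreeAlgebra.lift_ι_apply]
    · show ψ (gens 0) = mk c0
      rw [show gens 0 = TrivSqZeroExt.inl (FreeAlgebra.ι K 0) from rfl,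
        ψ, TrivSqZeroExt.lift_apply_inl, πA_ι0]
    · show ψ (gens 1) = mk c1
      rw [show gens 1 = TrivSqZeroExt.inl (FreeAlgebra.ι K 1) from rfl,
        ψ, TrivSqZeroExt.lift_apply_inl, πA_ι1]
    · show ψ (gens 2) = mk d0
      rw [show gens 2 = TrivSqZeroExt.inr ((1 : K), (0 : K), (0 : A)) from rfl,
        ψ, TrivSqZeroExt.lift_apply_inr, ψD_apply]
      simp [δ₀]
    · show ψ (gens 3) = mk d1
      rw [show gens 3 = TrivSqZeroExt.inr ((0 : K), (1 : K), (0 : A)) from rfl,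
        ψ, TrivSqZeroExt.lift_apply_inr, ψD_apply]
      simp [δ₁]
  exact fun s => AlgHom.congr_fun h s

lemma φ_inj : Function.Injective φ := Function.LeftInverse.injective ψφ

lemma φ_mk (x : L) : φ (mk x) = φ₀ x :=
  RingQuot.liftAlgHom_mkAlgHom_apply K φ₀ φ₀_rel x

lemma L1 (a : A) (m : D) : (a • m).1 = εA a * m.1 ∧ (a • m).2.1 = εA a * m.2.1 := by
  induction a using FreeAlgebra.induction generalizing m with
  | grade0 r =>
    rw [algebraMap_smul_D, AlgHom.commutes, Algebra.algebraMap_self_apply]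
    exact ⟨rfl, rfl⟩
  | grade1 i =>
    fin_cases i
    · show ((FreeAlgebra.ι K 0 : A) • m).1 = εA (FreeAlgebra.ι K 0) * m.1 ∧
        ((FreeAlgebra.ι K 0 : A) • m).2.1 = εA (FreeAlgebra.ι K 0) * m.2.1
      rw [ι0_smul, εA_ι]; simp
    · show ((FreeAlgebra.ι K 1 : A) • m).1 = εA (FreeAlgebra.ι K 1) * m.1 ∧
        ((FreeAlgebra.ι K 1 : A) • m).2.1 = εA (FreeAlgebra.ι K 1) * m.2.1
      rw [ι1_smul, εA_ι]; simp
  | mul a b ha hb =>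
    rw [mul_smul, map_mul]
    refine ⟨?_, ?_⟩
    · rw [(ha (b • m)).1, (hb m).1, mul_assoc]
    · rw [(ha (b • m)).2, (hb m).2, mul_assoc]
  | add a b ha hb =>
    rw [add_smul, map_add]
    constructor
    · rw [Prod.fst_add, (ha m).1, (hb m).1, add_mul]
    · show ((a • m).2 + (b • m).2).1 = _
      rw [Prod.fst_add, (ha m).2, (hb m).2, add_mul]

lemma L2 (a u : A) : a • ((0, 0, u) : D) = (0, 0, a * u) := by
  induction a using FreeAlgebra.induction generalizing u with
  | grade0 r =>
    rw [algebraMap_smul_D, Algebra.smul_def]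
    ext <;> simp
  | grade1 i =>
    fin_cases i
    · show (FreeAlgebra.ι K 0 : A) • ((0, 0, u) : D) = (0, 0, FreeAlgebra.ι K 0 * u)
      rw [ι0_smul]; simp
    · show (FreeAlgebra.ι K 1 : A) • ((0, 0, u) : D) = (0, 0, FreeAlgebra.ι K 1 * u)
      rw [ι1_smul]; simp
  | mul a b ha hb => rw [mul_smul, hb, ha, mul_assoc]
  | add a b ha hb =>
    rw [add_smul, ha, hb, add_mul]
    ext <;> simp

open TrivSqZeroExt in
lemma key1 (x y : S') (hx : x.fst = 0) : x * y = εA y.fst • x := by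
  refine TrivSqZeroExt.ext ?_ ?_
  · rw [fst_mul, hx, zero_mul, fst_smul, hx, smul_zero]
  · rw [snd_mul, hx, snd_smul]
    show (0 : A) • y.snd + MulOpposite.op y.fst • x.snd = εA y.fst • x.snd
    rw [zero_smul, zero_add, op_smul_def, MulOpposite.unop_op]

open TrivSqZeroExt in
lemma key2 (x y : S') (hy : y.fst = 0) : x * y = TrivSqZeroExt.inr (x.fst • y.snd) := by
  refine TrivSqZeroExt.ext ?_ ?_
  · rw [fst_mul, hy, mul_zero, fst_inr]
  · rw [snd_mul, hy, snd_inr]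
    show x.fst • y.snd + MulOpposite.op (0 : A) • x.snd = x.fst • y.snd
    rw [op_smul_def, MulOpposite.unop_op, map_zero, zero_smul, add_zero]

/-- map a polynomial along an additive monoid hom. -/
def apmap {M N : Type*} [Semiring M] [Semiring N] (f : M →+ N) (p : Polynomial M) :
    Polynomial N := ⟨.ofCoeff (Finsupp.mapRange f f.map_zero p.toFinsupp.coeff)⟩

lemma coeff_apmap {M N : Type*} [Semiring M] [Semiring N] (f : M →+ N) (p : Polynomial M)
    (n : ℕ) : (apmap f p).coeff n = f (p.coeff n) := by
  rcases p with ⟨q⟩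
  simp [apmap, Polynomial.coeff, Finsupp.mapRange_apply]

def sHom : S' →+ K where
  toFun x := x.snd.1
  map_zero' := rfl
  map_add' x y := rfl

def tHom : S' →+ K where
  toFun x := x.snd.2.1
  map_zero' := rfl
  map_add' x y := rfl

def uHom : S' →+ A where
  toFun x := x.snd.2.2
  map_zero' := rfl
  map_add' x y := rfl

lemma sHom_apply (x : S') : sHom x = x.snd.1 := rfl
lemma tHom_apply (x : S') : tHom x = x.snd.2.1 := rfl
lemma uHom_apply (x : S') : uHom x = x.snd.2.2 := rfl

lemma apmap_zero {M N : Type*} [Semiring M] [Semiring N] (f : M →+ N) :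
    apmap f 0 = 0 := by
  ext n; rw [coeff_apmap]; simp

lemma φ_mk_d0 : φ (mk d0) = TrivSqZeroExt.inr ((1:K), (0:K), (0:A)) := by
  rw [φ_mk, φ₀, d0, FreeAlgebra.lift_ι_apply]
  rfl

theorem main : IsInnerMcCoy NielsenRing := by
  intro f g hf hg hfgf
  classical
  have hinj : Function.Injective (φ.toRingHom : NielsenRing →+* S') := φ_inj
  set F := f.map φ.toRingHom with hFdef
  set G := g.map φ.toRingHom with hGdef
  clear_value F G
  have hFGF : F * G * F = 0 := by
    rw [hFdef, hGdef, ← Polynomial.map_mul, ← Polynomial.map_mul, hfgf, Polynomial.map_zero]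
  by_cases hc : ∀ n, εA ((F.coeff n).fst) = 0
  case pos =>
    refine ⟨mk d0, ?_, ?_⟩
    · intro h0
      have h1 : φ (mk d0) = 0 := by rw [h0, map_zero]
      rw [φ_mk_d0] at h1
      have h2 := congrArg (fun z : S' => z.snd.1) h1
      simp only [TrivSqZeroExt.snd_inr, TrivSqZeroExt.snd_zero] at h2
      exact one_ne_zero h2
    · apply Polynomial.map_injective φ.toRingHom hinj
      rw [Polynomial.map_mul, Polynomial.map_mul, Polynomial.map_zero, Polynomial.map_C,
        ← hFdef, show (φ.toRingHom (mk d0) : S') = TrivSqZeroExt.inr ((1:K), (0:K), (0:A))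
          from φ_mk_d0, mul_assoc]
      have hzero : Polynomial.C (TrivSqZeroExt.inr ((1:K), (0:K), (0:A)) : S') * F = 0 := by
        refine Polynomial.ext fun n => ?_
        rw [Polynomial.coeff_C_mul, Polynomial.coeff_zero,
          key1 _ _ (TrivSqZeroExt.fst_inr A _), hc n, zero_smul]
      rw [hzero, mul_zero]
  case neg =>
    exfalso
    push_neg at hc
    obtain ⟨n₀, hn₀⟩ := hc
    set Fa := F.map (TrivSqZeroExt.fstHom K A D).toRingHom with hFadef
    set Ga := G.map (TrivSqZeroExt.fstHom K A D).toRingHom with hGadef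
    clear_value Fa Ga
    have hFa : Fa ≠ 0 := by
      intro h
      apply hn₀
      have h2 := congrArg (fun p => Polynomial.coeff p n₀) h
      simp only [hFadef, Polynomial.coeff_map, Polynomial.coeff_zero] at h2
      rw [show (F.coeff n₀).fst = (TrivSqZeroExt.fstHom K A D).toRingHom (F.coeff n₀) from rfl,
        h2, map_zero]
    have hGa : Ga = 0 := by
      have h0 : Fa * Ga * Fa = 0 := by
        rw [hFadef, hGadef, ← Polynomial.map_mul, ← Polynomial.map_mul, hFGF,
          Polynomial.map_zero]
      rcases mul_eq_zero.mp h0 with h | h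
      · rcases mul_eq_zero.mp h with h' | h'
        · exact absurd h' hFa
        · exact h'
      · exact absurd h hFa
    have hGfst : ∀ j, (G.coeff j).fst = 0 := by
      intro j
      have h2 := congrArg (fun p => Polynomial.coeff p j) hGa
      simpa only [hGadef, Polynomial.coeff_map, Polynomial.coeff_zero, AlgHom.toRingHom_eq_coe, RingHom.coe_coe, TrivSqZeroExt.fstHom_apply] using h2
    set εp := Fa.map εA.toRingHom with hεpdef
    clear_value εp
    have hεpcoeff : ∀ j, εp.coeff j = εA ((F.coeff j).fst) := by
      intro j
      rw [hεpdef, Polynomial.coeff_map, hFadef, Polynomial.coeff_map]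
      rfl
    have hεp : εp ≠ 0 := by
      intro h
      apply hn₀
      rw [← hεpcoeff n₀, h, Polynomial.coeff_zero]
    have hH : F * G = 0 := by
      set q := εp.map (algebraMap K S') with hqdef
      clear_value q
      have hmonic : q.Monic := by
        rw [hqdef]
        apply Polynomial.Monic.map
        have hl := Polynomial.leadingCoeff_ne_zero.mpr hεp
        have hone : ∀ k : K, k ≠ 0 → k = 1 := by decide
        exact hone _ hl
      have hHfst : ∀ n, ((F * G).coeff n).fst = 0 := by
        intro n
        have h2 : (F * G).map (TrivSqZeroExt.fstHom K A D).toRingHom = 0 := by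
          rw [Polynomial.map_mul, ← hFadef, ← hGadef, hGa, mul_zero]
        have h3 := congrArg (fun p => Polynomial.coeff p n) h2
        simpa only [Polynomial.coeff_map, Polynomial.coeff_zero, AlgHom.toRingHom_eq_coe, RingHom.coe_coe, TrivSqZeroExt.fstHom_apply] using h3
      have hq : (F * G) * F = (F * G) * q := by
        refine Polynomial.ext fun n => ?_
        rw [Polynomial.coeff_mul, Polynomial.coeff_mul]
        refine Finset.sum_congr rfl fun ij _ => ?_
        rw [key1 _ _ (hHfst ij.1), key1 _ _ (hHfst ij.1)]
        congr 1
        rw [hqdef, Polynomial.coeff_map, TrivSqZeroExt.algebraMap_eq_inl',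
          TrivSqZeroExt.fst_inl, AlgHom.commutes, Algebra.algebraMap_self_apply, hεpcoeff]
      rw [hq] at hFGF
      exact (Polynomial.Monic.mul_left_eq_zero_iff hmonic).mp hFGF
    set Gs := apmap sHom G with hGsdef
    set Gt := apmap tHom G with hGtdef
    clear_value Gs Gt
    have hsmul : εp * Gs = 0 := by
      have h2 : apmap sHom (F * G) = εp * Gs := by
        refine Polynomial.ext fun n => ?_
        rw [coeff_apmap, Polynomial.coeff_mul, Polynomial.coeff_mul, map_sum]
        refine Finset.sum_congr rfl fun ij _ => ?_
        rw [key2 _ _ (hGfst ij.2)]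
        show ((F.coeff ij.1).fst • (G.coeff ij.2).snd).1 = εp.coeff ij.1 * Gs.coeff ij.2
        rw [(L1 _ _).1, hεpcoeff, hGsdef, coeff_apmap]
        rfl
      rw [← h2, hH, apmap_zero]
    have htmul : εp * Gt = 0 := by
      have h2 : apmap tHom (F * G) = εp * Gt := by
        refine Polynomial.ext fun n => ?_
        rw [coeff_apmap, Polynomial.coeff_mul, Polynomial.coeff_mul, map_sum]
        refine Finset.sum_congr rfl fun ij _ => ?_
        rw [key2 _ _ (hGfst ij.2)]
        show ((F.coeff ij.1).fst • (G.coeff ij.2).snd).2.1 = εp.coeff ij.1 * Gt.coeff ij.2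
        rw [(L1 _ _).2, hεpcoeff, hGtdef, coeff_apmap]
        rfl
      rw [← h2, hH, apmap_zero]
    have hGs : Gs = 0 := by
      rcases mul_eq_zero.mp hsmul with h | h
      · exact absurd h hεp
      · exact h
    have hGt : Gt = 0 := by
      rcases mul_eq_zero.mp htmul with h | h
      · exact absurd h hεp
      · exact h
    have hs : ∀ j, (G.coeff j).snd.1 = 0 := by
      intro j
      have h2 := congrArg (fun p => Polynomial.coeff p j) hGs
      simpa only [hGsdef, coeff_apmap, Polynomial.coeff_zero, sHom_apply] using h2
    have ht : ∀ j, (G.coeff j).snd.2.1 = 0 := by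
      intro j
      have h2 := congrArg (fun p => Polynomial.coeff p j) hGt
      simpa only [hGtdef, coeff_apmap, Polynomial.coeff_zero, tHom_apply] using h2
    set Gu := apmap uHom G with hGudef
    clear_value Gu
    have humul : Fa * Gu = 0 := by
      have h2 : apmap uHom (F * G) = Fa * Gu := by
        refine Polynomial.ext fun n => ?_
        rw [coeff_apmap, Polynomial.coeff_mul, Polynomial.coeff_mul, map_sum]
        refine Finset.sum_congr rfl fun ij _ => ?_
        rw [key2 _ _ (hGfst ij.2)]
        show ((F.coeff ij.1).fst • (G.coeff ij.2).snd).2.2 = Fa.coeff ij.1 * Gu.coeff ij.2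
        have hm : (G.coeff ij.2).snd = ((0:K), (0:K), (G.coeff ij.2).snd.2.2) :=
          Prod.ext (hs _) (Prod.ext (ht _) rfl)
        have hcoe : Fa.coeff ij.1 = (F.coeff ij.1).fst := by
          rw [hFadef, Polynomial.coeff_map]; rfl
        rw [hm, L2, hcoe, hGudef, coeff_apmap, uHom_apply]
      rw [← h2, hH, apmap_zero]
    have hGu : Gu = 0 := by
      rcases mul_eq_zero.mp humul with h | h
      · exact absurd h hFa
      · exact h
    have hu : ∀ j, (G.coeff j).snd.2.2 = 0 := by
      intro j
      have h2 := congrArg (fun p => Polynomial.coeff p j) hGu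
      simpa only [hGudef, coeff_apmap, Polynomial.coeff_zero, uHom_apply] using h2
    have hG0 : G = 0 := by
      refine Polynomial.ext fun j => ?_
      rw [Polynomial.coeff_zero]
      refine TrivSqZeroExt.ext (hGfst j) ?_
      rw [TrivSqZeroExt.snd_zero]
      exact Prod.ext (hs j) (Prod.ext (ht j) (hu j))
    rw [hGdef] at hG0
    exact hg ((Polynomial.map_eq_zero_iff hinj).mp hG0)

end Nielsen

/-- The ring `S = ℤ₂⟨c₀, c₁, d₀, d₁⟩ / ⟨c₀d₀, c₀d₁ + c₁d₀, c₁d₁, dᵢdⱼ, dᵢcⱼ⟩`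
is inner McCoy. -/
theorem nielsenRing_innerMcCoy : IsInnerMcCoy NielsenRing := by
  exact Nielsen.main

end
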